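/- arXiv:1311.3396 — 2 statements merged into one kernel-verified Lean document; each statement's English description precedes it below -/
import Mathlib

section
/- For an input-enabled probabilistic automaton with finite state set, distribution-based bisimilarity ∼ is continuous: if μ_i ∼ ν_i for all i, lim_i μ_i = μ, and lim_i ν_i = ν, then μ ∼ ν. -/
open Finset

structure ProbDist (S : Type) [Fintype S] where
  f : S → ℝ
  nonneg : ∀ s, 0 ≤ f s
  sum_one : ∑ s, f s = 1

/-- Probability assigned by a distribution to a set of states. -/
noncomputable def ProbDist.pr {S : Type} [Fintype S] (μ : ProbDist S) (C : Set S) : ℝ :=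
  ∑ s, C.indicator μ.f s

/-- μ(A) := Σ_{s : L s = A} μ(s). -/
noncomputable def pOf {S AP : Type} [Fintype S] (L : S → Finset AP) (μ : ProbDist S)
    (A : Finset AP) : ℝ :=
  μ.pr {s | L s = A}

/-- d_AP(μ,ν) := (1/2) Σ_{A ⊆ AP} |μ(A) − ν(A)|. -/
noncomputable def dAP {S AP : Type} [Fintype S] [Fintype AP] [DecidableEq AP]
    (L : S → Finset AP) (μ ν : ProbDist S) : ℝ :=
  (1 / 2) * ∑ A : Finset AP, |pOf L μ A - pOf L ν A|

/-- A (Segala) probabilistic automaton, image-finite. -/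
structure PA (S Act AP : Type) [Fintype S] where
  trans : S → Act → ProbDist S → Prop
  L : S → Finset AP
  imageFinite : ∀ s a, {μ | trans s a μ}.Finite

def PA.InputEnabled {S Act AP : Type} [Fintype S] (M : PA S Act AP) : Prop :=
  ∀ s a, ∃ μ, M.trans s a μ

noncomputable def PA.probOf {S Act AP : Type} [Fintype S] (M : PA S Act AP)
    (μ : ProbDist S) (A : Finset AP) : ℝ := pOf M.L μ A

/-- Combined transition s --a-->_P μ : μ is a convex combination of one-step successors. -/
def Combined {S Act AP : Type} [Fintype S] (M : PA S Act AP) (s : S) (a : Act)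
    (μ : ProbDist S) : Prop :=
  ∃ (n : ℕ) (p : Fin n → ℝ) (ν : Fin n → ProbDist S),
    (∀ i, 0 ≤ p i) ∧ (∑ i, p i = 1) ∧ (∀ i, M.trans s a (ν i)) ∧
    (∀ t, μ.f t = ∑ i, p i * (ν i).f t)

/-- Lifted transition μ --a--> μ' between distributions. -/
def Lifted {S Act AP : Type} [Fintype S] (M : PA S Act AP) (μ : ProbDist S) (a : Act)
    (μ' : ProbDist S) : Prop :=
  ∃ k : S → ProbDist S, (∀ s, 0 < μ.f s → Combined M s a (k s)) ∧
    (∀ t, μ'.f t = ∑ s, μ.f s * (k s).f t)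

/-- ProbDist S carries the topology inherited from ℝ^{|S|}. -/
noncomputable instance {S : Type} [Fintype S] : TopologicalSpace (ProbDist S) :=
  TopologicalSpace.induced (fun μ : ProbDist S => μ.f) inferInstance

/-- Distribution-based bisimulation. -/
def IsBisim {S Act AP : Type} [Fintype S] (M : PA S Act AP)
    (R : ProbDist S → ProbDist S → Prop) : Prop :=
  Symmetric R ∧ ∀ μ ν, R μ ν →
    (∀ A : Finset AP, M.probOf μ A = M.probOf ν A) ∧
    (∀ a μ', Lifted M μ a μ' → ∃ ν', Lifted M ν a ν' ∧ R μ' ν')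


section AuxProof

open Filter Topology

variable {S Act AP : Type} [Fintype S]

lemma probdist_inducing (S : Type) [Fintype S] :
    Topology.IsInducing (fun μ : ProbDist S => μ.f) := ⟨rfl⟩

lemma tendsto_probdist_iff {xs : ℕ → ProbDist S} {x : ProbDist S} :
    Tendsto xs atTop (nhds x) ↔ Tendsto (fun i => (xs i).f) atTop (nhds x.f) :=
  (probdist_inducing S).tendsto_nhds_iff

def Kset (T : Type) [Fintype T] : Set (T → ℝ) := {g | (∀ s, 0 ≤ g s) ∧ ∑ s, g s = 1}

lemma mem_kset (μ : ProbDist S) : μ.f ∈ Kset S := ⟨μ.nonneg, μ.sum_one⟩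

lemma kset_compact (T : Type) [Fintype T] : IsCompact (Kset T) := by
  have hsub : Kset T ⊆ Set.univ.pi (fun _ : T => Set.Icc (0:ℝ) 1) := by
    intro g hg s _
    refine ⟨hg.1 s, ?_⟩
    calc g s ≤ ∑ t, g t := Finset.single_le_sum (fun t _ => hg.1 t) (Finset.mem_univ s)
      _ = 1 := hg.2
  have hclosed : IsClosed (Kset T) := by
    have heq : Kset T = (⋂ s : T, {g : T → ℝ | 0 ≤ g s}) ∩ {g : T → ℝ | ∑ s, g s = 1} := by
      ext g; simp [Kset, Set.mem_iInter]
    rw [heq]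
    refine IsClosed.inter (isClosed_iInter fun s => ?_) ?_
    · exact isClosed_le continuous_const (continuous_apply s)
    · exact isClosed_eq (continuous_finset_sum _ fun s _ => continuous_apply s) continuous_const
  exact IsCompact.of_isClosed_subset (isCompact_univ_pi fun _ => isCompact_Icc) hclosed hsub

lemma exists_subseq (xs : ℕ → ProbDist S) :
    ∃ (x : ProbDist S) (φ : ℕ → ℕ), StrictMono φ ∧
      Tendsto (fun i => xs (φ i)) atTop (nhds x) := by
  obtain ⟨g, hg, φ, hφ, htend⟩ := (kset_compact S).tendsto_subseq
    (x := fun i => (xs i).f) (fun i => mem_kset (xs i))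
  exact ⟨⟨g, hg.1, hg.2⟩, φ, hφ, tendsto_probdist_iff.2 htend⟩

noncomputable def Phi (M : PA S Act AP) (s : S) (a : Act) :
    (↥((M.imageFinite s a).toFinset) → ℝ) → (S → ℝ) :=
  fun w t => ∑ ν, w ν * (ν : ProbDist S).f t

lemma combined_iff (M : PA S Act AP) {s : S} {a : Act} {μ : ProbDist S} :
    Combined M s a μ ↔
      ∃ w ∈ Kset ↥((M.imageFinite s a).toFinset), Phi M s a w = μ.f := by
  classical
  constructor
  · rintro ⟨n, p, ν, hp, hsum, htr, hf⟩
    have hmem : ∀ i, ν i ∈ (M.imageFinite s a).toFinset :=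
      fun i => (Set.Finite.mem_toFinset _).2 (htr i)
    set g : Fin n → ↥((M.imageFinite s a).toFinset) := fun i => ⟨ν i, hmem i⟩ with hg
    refine ⟨fun x => ∑ i ∈ Finset.univ.filter (fun i => g i = x), p i, ⟨?_, ?_⟩, ?_⟩
    · intro x; exact Finset.sum_nonneg fun i _ => hp i
    · rw [Finset.sum_fiberwise Finset.univ g p]; exact hsum
    · funext t
      show ∑ x, (∑ i ∈ Finset.univ.filter (fun i => g i = x), p i) * (x : ProbDist S).f t = μ.f t
      have key : ∀ x : ↥((M.imageFinite s a).toFinset),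
          (∑ i ∈ Finset.univ.filter (fun i => g i = x), p i) * (x : ProbDist S).f t
          = ∑ i ∈ Finset.univ.filter (fun i => g i = x), p i * (ν i).f t := by
        intro x
        rw [Finset.sum_mul]
        refine Finset.sum_congr rfl fun i hi => ?_
        have hgi : g i = x := (Finset.mem_filter.1 hi).2
        rw [← hgi]
      calc ∑ x, (∑ i ∈ Finset.univ.filter (fun i => g i = x), p i) * (x : ProbDist S).f t
          = ∑ x, ∑ i ∈ Finset.univ.filter (fun i => g i = x), p i * (ν i).f t :=
            Finset.sum_congr rfl fun x _ => key x
        _ = ∑ i, p i * (ν i).f t := Finset.sum_fiberwise _ _ _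
        _ = μ.f t := (hf t).symm
  · rintro ⟨w, ⟨hw0, hw1⟩, hPhi⟩
    set e := ((M.imageFinite s a).toFinset).equivFin with he
    refine ⟨_, fun i => w (e.symm i), fun i => ↑(e.symm i), fun i => hw0 _, ?_, ?_, ?_⟩
    · rw [Equiv.sum_comp e.symm w]; exact hw1
    · intro i; exact (Set.Finite.mem_toFinset _).1 (e.symm i).2
    · intro t
      have h1 := congrFun hPhi t
      rw [← h1]
      exact (Equiv.sum_comp e.symm
        (fun x : ↥((M.imageFinite s a).toFinset) => w x * (x : ProbDist S).f t)).symm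

lemma combined_closed (M : PA S Act AP) (s : S) (a : Act) :
    IsClosed ((Phi M s a) '' Kset ↥((M.imageFinite s a).toFinset)) := by
  have hc : Continuous (Phi M s a) := by
    apply continuous_pi
    intro t
    exact continuous_finset_sum _ fun ν _ => (continuous_apply ν).mul continuous_const
  exact ((kset_compact _).image hc).isClosed

lemma trans_combined (M : PA S Act AP) {s : S} {a : Act} {ν : ProbDist S}
    (h : M.trans s a ν) : Combined M s a ν :=
  ⟨1, fun _ => 1, fun _ => ν, fun _ => zero_le_one, by simp, fun _ => h, fun t => by simp⟩

noncomputable def defaultK (M : PA S Act AP) (hM : M.InputEnabled) (a : Act) (s : S) :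
    ProbDist S := Classical.choose (hM s a)

lemma defaultK_combined (M : PA S Act AP) (hM : M.InputEnabled) (a : Act) (s : S) :
    Combined M s a (defaultK M hM a s) :=
  trans_combined M (Classical.choose_spec (hM s a))

noncomputable def push (k : S → ProbDist S) (ρ : ProbDist S) : ProbDist S where
  f := fun t => ∑ s, ρ.f s * (k s).f t
  nonneg := fun t => Finset.sum_nonneg fun s _ => mul_nonneg (ρ.nonneg s) ((k s).nonneg t)
  sum_one := by
    rw [Finset.sum_comm]
    calc ∑ s, ∑ t, ρ.f s * (k s).f t = ∑ s, ρ.f s * ∑ t, (k s).f t :=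
          Finset.sum_congr rfl fun s _ => (Finset.mul_sum _ _ _).symm
      _ = ∑ s, ρ.f s := by simp [ProbDist.sum_one]
      _ = 1 := ρ.sum_one

lemma lifted_approx (M : PA S Act AP) (hM : M.InputEnabled) {μ μ' : ProbDist S} {a : Act}
    (h : Lifted M μ a μ') {μs : ℕ → ProbDist S} (hμ : Tendsto μs atTop (nhds μ)) :
    ∃ μ's : ℕ → ProbDist S, (∀ i, Lifted M (μs i) a (μ's i)) ∧
      Tendsto μ's atTop (nhds μ') := by
  classical
  obtain ⟨k, hk, hkf⟩ := h
  set k' : S → ProbDist S :=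
    fun s => if h : 0 < μ.f s then k s else defaultK M hM a s with hk'
  have hk'comb : ∀ s, Combined M s a (k' s) := by
    intro s; rw [hk']; dsimp only
    split
    · exact hk s (by assumption)
    · exact defaultK_combined M hM a s
  refine ⟨fun i => push k' (μs i), fun i => ⟨k', fun s _ => hk'comb s, fun t => rfl⟩, ?_⟩
  rw [tendsto_probdist_iff, tendsto_pi_nhds]
  intro t
  have hcoord : ∀ s, Tendsto (fun i => (μs i).f s) atTop (nhds (μ.f s)) := fun s =>
    tendsto_pi_nhds.1 (tendsto_probdist_iff.1 hμ) s
  have htend : Tendsto (fun i => ∑ s, (μs i).f s * (k' s).f t) atTop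
      (nhds (∑ s, μ.f s * (k' s).f t)) :=
    tendsto_finset_sum _ fun s _ => (hcoord s).mul tendsto_const_nhds
  have heq : ∑ s, μ.f s * (k' s).f t = μ'.f t := by
    rw [hkf t]
    refine Finset.sum_congr rfl fun s _ => ?_
    by_cases hs : 0 < μ.f s
    · rw [hk']; simp [hs]
    · have h0 : μ.f s = 0 := le_antisymm (not_lt.1 hs) (μ.nonneg s)
      simp [h0]
  rw [← heq]
  exact htend

lemma lifted_limit (M : PA S Act AP) (hM : M.InputEnabled) {a : Act}
    {νs ν's : ℕ → ProbDist S} {ν ν' : ProbDist S}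
    (hν : Tendsto νs atTop (nhds ν)) (hν' : Tendsto ν's atTop (nhds ν'))
    (hL : ∀ i, Lifted M (νs i) a (ν's i)) : Lifted M ν a ν' := by
  classical
  choose k hk1 hk2 using hL
  have hgK : ∀ i, (fun s => (k i s).f) ∈ Set.univ.pi (fun _ : S => Kset S) :=
    fun i s _ => mem_kset _
  obtain ⟨hlim, hhK, φ, hφ, htend⟩ :=
    (isCompact_univ_pi fun _ : S => kset_compact S).tendsto_subseq hgK
  have hcoord : ∀ s t, Tendsto (fun i => (k (φ i) s).f t) atTop (nhds (hlim s t)) := by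
    intro s t
    exact tendsto_pi_nhds.1 (tendsto_pi_nhds.1 htend s) t
  have hνc : ∀ s, Tendsto (fun i => (νs (φ i)).f s) atTop (nhds (ν.f s)) := fun s =>
    tendsto_pi_nhds.1 (tendsto_probdist_iff.1 (hν.comp hφ.tendsto_atTop)) s
  have hKmem : ∀ s, hlim s ∈ Kset S := fun s => hhK s (Set.mem_univ s)
  set kl : S → ProbDist S := fun s =>
    if hp : 0 < ν.f s then ⟨hlim s, (hKmem s).1, (hKmem s).2⟩ else defaultK M hM a s with hkl
  refine ⟨kl, ?_, ?_⟩
  · intro s hs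
    rw [hkl]; dsimp only; rw [dif_pos hs]
    have hcl := combined_closed M s a
    have hev : ∀ᶠ i in atTop,
        (fun t => (k (φ i) s).f t) ∈ Phi M s a '' Kset ↥((M.imageFinite s a).toFinset) := by
      have hev0 : ∀ᶠ i in atTop, 0 < (νs (φ i)).f s :=
        (hνc s).eventually (eventually_gt_nhds hs)
      refine hev0.mono fun i hi => ?_
      obtain ⟨w, hw, hPhi⟩ := (combined_iff M).1 (hk1 (φ i) s hi)
      exact ⟨w, hw, hPhi⟩
    have hmem : hlim s ∈ Phi M s a '' Kset ↥((M.imageFinite s a).toFinset) :=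
      hcl.mem_of_tendsto (tendsto_pi_nhds.2 (hcoord s)) hev
    obtain ⟨w, hw, hPhi⟩ := hmem
    exact (combined_iff M).2 ⟨w, hw, hPhi⟩
  · intro t
    have h1 : Tendsto (fun i => (ν's (φ i)).f t) atTop (nhds (ν'.f t)) :=
      tendsto_pi_nhds.1 (tendsto_probdist_iff.1 (hν'.comp hφ.tendsto_atTop)) t
    have h2 : Tendsto (fun i => (ν's (φ i)).f t) atTop (nhds (∑ s, ν.f s * hlim s t)) := by
      have hrw : (fun i => (ν's (φ i)).f t)
          = fun i => ∑ s, (νs (φ i)).f s * (k (φ i) s).f t :=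
        funext fun i => hk2 (φ i) t
      rw [hrw]
      exact tendsto_finset_sum _ fun s _ => (hνc s).mul (hcoord s t)
    have huniq := tendsto_nhds_unique h1 h2
    rw [huniq]
    refine Finset.sum_congr rfl fun s _ => ?_
    by_cases hs : 0 < ν.f s
    · rw [hkl]; dsimp only; rw [dif_pos hs]
    · have h0 : ν.f s = 0 := le_antisymm (not_lt.1 hs) (ν.nonneg s)
      simp [h0]

lemma probOf_tendsto {M : PA S Act AP} {xs : ℕ → ProbDist S} {x : ProbDist S}
    (h : Tendsto xs atTop (nhds x)) (A : Finset AP) :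
    Tendsto (fun i => M.probOf (xs i) A) atTop (nhds (M.probOf x A)) := by
  have hcoord : ∀ s, Tendsto (fun i => (xs i).f s) atTop (nhds (x.f s)) := fun s =>
    tendsto_pi_nhds.1 (tendsto_probdist_iff.1 h) s
  unfold PA.probOf pOf ProbDist.pr
  refine tendsto_finset_sum _ fun s _ => ?_
  by_cases hs : s ∈ {u : S | M.L u = A}
  · simpa [Set.indicator_of_mem hs] using hcoord s
  · simp [Set.indicator_of_notMem hs]

end AuxProof

/-- Distribution-based bisimilarity. -/
def Bisimilar {S Act AP : Type} [Fintype S] (M : PA S Act AP) (μ ν : ProbDist S) : Prop :=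
  ∃ R, IsBisim M R ∧ R μ ν


section Aux2
open Filter Topology
variable {S Act AP : Type} [Fintype S]

lemma bisimilar_symm {M : PA S Act AP} {x y : ProbDist S} (h : Bisimilar M x y) :
    Bisimilar M y x := by
  obtain ⟨R, hR, hxy⟩ := h; exact ⟨R, hR, hR.1 hxy⟩

lemma bisimilar_probOf {M : PA S Act AP} {x y : ProbDist S} (h : Bisimilar M x y) :
    ∀ A : Finset AP, M.probOf x A = M.probOf y A := by
  obtain ⟨R, hR, hxy⟩ := h; exact (hR.2 x y hxy).1

lemma bisimilar_step {M : PA S Act AP} {x y x' : ProbDist S} {a : Act}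
    (h : Bisimilar M x y) (hx : Lifted M x a x') :
    ∃ y', Lifted M y a y' ∧ Bisimilar M x' y' := by
  obtain ⟨R, hR, hxy⟩ := h
  obtain ⟨y', hy', hR'⟩ := (hR.2 x y hxy).2 a x' hx
  exact ⟨y', hy', R, hR, hR'⟩


end Aux2

theorem stmt6 {S Act AP : Type} [Fintype S] (M : PA S Act AP) (hM : M.InputEnabled)
    (μs νs : ℕ → ProbDist S) (μ ν : ProbDist S)
    (h : ∀ i, Bisimilar M (μs i) (νs i))
    (hμ : Filter.Tendsto μs Filter.atTop (nhds μ))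
    (hν : Filter.Tendsto νs Filter.atTop (nhds ν)) :
    Bisimilar M μ ν := by
  classical
  refine ⟨fun x y => ∃ xs ys : ℕ → ProbDist S, (∀ i, Bisimilar M (xs i) (ys i)) ∧
      Filter.Tendsto xs Filter.atTop (nhds x) ∧ Filter.Tendsto ys Filter.atTop (nhds y),
    ⟨?_, ?_⟩, μs, νs, h, hμ, hν⟩
  · rintro x y ⟨xs, ys, hb, hx, hy⟩
    exact ⟨ys, xs, fun i => bisimilar_symm (hb i), hy, hx⟩
  · rintro x y ⟨xs, ys, hb, hx, hy⟩
    constructor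
    · intro A
      have h1 := probOf_tendsto (M := M) hx A
      have h2 := probOf_tendsto (M := M) hy A
      have h3 : Filter.Tendsto (fun i => M.probOf (xs i) A) Filter.atTop
          (nhds (M.probOf y A)) :=
        h2.congr fun i => (bisimilar_probOf (hb i) A).symm
      exact tendsto_nhds_unique h1 h3
    · intro a x' hx'
      obtain ⟨x's, hx'lift, hx'tend⟩ := lifted_approx M hM hx' hx
      have hy' : ∀ i, ∃ y', Lifted M (ys i) a y' ∧ Bisimilar M (x's i) y' :=
        fun i => bisimilar_step (hb i) (hx'lift i)
      choose y's hy'lift hy'bis using hy'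
      obtain ⟨y', φ, hφ, hy'tend⟩ := exists_subseq y's
      refine ⟨y', ?_, ?_⟩
      · exact lifted_limit M hM (hy.comp hφ.tendsto_atTop) hy'tend fun i => hy'lift (φ i)
      · exact ⟨fun i => x's (φ i), fun i => y's (φ i), fun i => hy'bis (φ i),
          hx'tend.comp hφ.tendsto_atTop, hy'tend⟩
end

section
/- The bisimulation distance D_b(μ,ν) = inf{ε ≥ 0 : μ ∼_ε ν} is a pseudometric on Dist(S): D_b(μ,μ) = 0, D_b is symmetric, and D_b(μ,ν) + D_b(ν,ω) ≥ D_b(μ,ω). -/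
open Finset

/-- A (discounted) approximate bisimulation: a family of symmetric relations. -/
def IsApproxBisim {S Act AP : Type} [Fintype S] [Fintype AP] [DecidableEq AP]
    (M : PA S Act AP) (γ : ℝ) (R : ℝ → ProbDist S → ProbDist S → Prop) : Prop :=
  (∀ ε, Symmetric (R ε)) ∧ ∀ ε μ ν, R ε μ ν →
    dAP M.L μ ν ≤ ε ∧
    ∀ a μ', Lifted M μ a μ' → ∃ ν', Lifted M ν a ν' ∧ R (ε / γ) μ' ν'

/-- μ ∼_ε ν. -/
def ApproxBisimilar {S Act AP : Type} [Fintype S] [Fintype AP] [DecidableEq AP]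
    (M : PA S Act AP) (γ : ℝ) (ε : ℝ) (μ ν : ProbDist S) : Prop :=
  ∃ R, IsApproxBisim M γ R ∧ R ε μ ν

/-- The bisimulation distance D_b(μ,ν) = inf {ε ≥ 0 : μ ∼_ε ν}. -/
noncomputable def Db {S Act AP : Type} [Fintype S] [Fintype AP] [DecidableEq AP]
    (M : PA S Act AP) (γ : ℝ) (μ ν : ProbDist S) : ℝ :=
  sInf {ε | 0 ≤ ε ∧ ApproxBisimilar M γ ε μ ν}


section Aux

variable {S Act AP : Type} [Fintype S] [Fintype AP] [DecidableEq AP]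

lemma pOf_nonneg (L : S → Finset AP) (μ : ProbDist S) (A : Finset AP) :
    0 ≤ pOf L μ A := by
  unfold pOf ProbDist.pr
  exact Finset.sum_nonneg fun s _ => Set.indicator_nonneg (fun t _ => μ.nonneg t) s

lemma sum_pOf (L : S → Finset AP) (μ : ProbDist S) :
    ∑ A : Finset AP, pOf L μ A = 1 := by
  unfold pOf ProbDist.pr
  rw [Finset.sum_comm]
  have h : ∀ s : S, ∑ A : Finset AP, Set.indicator {s' | L s' = A} μ.f s = μ.f s := by
    intro s
    have h2 : ∀ A : Finset AP, Set.indicator {s' | L s' = A} μ.f s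
        = if L s = A then μ.f s else 0 := by
      intro A
      by_cases h : L s = A <;> simp [Set.indicator, h]
    rw [Finset.sum_congr rfl fun A _ => h2 A]
    simp
  rw [Finset.sum_congr rfl fun s _ => h s, μ.sum_one]

lemma dAP_le_one (M : PA S Act AP) (μ ν : ProbDist S) : dAP M.L μ ν ≤ 1 := by
  unfold dAP
  have h : ∑ A : Finset AP, |pOf M.L μ A - pOf M.L ν A|
      ≤ ∑ A : Finset AP, (pOf M.L μ A + pOf M.L ν A) := by
    apply Finset.sum_le_sum
    intro A _
    have := pOf_nonneg M.L μ A
    have := pOf_nonneg M.L ν A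
    rw [abs_sub_le_iff]; constructor <;> linarith
  rw [Finset.sum_add_distrib, sum_pOf, sum_pOf] at h
  linarith

lemma dAP_self (M : PA S Act AP) (μ : ProbDist S) : dAP M.L μ μ = 0 := by
  simp [dAP]

lemma dAP_triangle (M : PA S Act AP) (μ ν ω : ProbDist S) :
    dAP M.L μ ω ≤ dAP M.L μ ν + dAP M.L ν ω := by
  unfold dAP
  rw [← mul_add, ← Finset.sum_add_distrib]
  have h : ∑ A : Finset AP, |pOf M.L μ A - pOf M.L ω A|
      ≤ ∑ A : Finset AP, (|pOf M.L μ A - pOf M.L ν A| + |pOf M.L ν A - pOf M.L ω A|) := by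
    apply Finset.sum_le_sum
    intro A _
    exact abs_sub_le _ _ _
  linarith

/-- Input-enabledness gives a lifted transition from every distribution. -/
lemma lifted_exists (M : PA S Act AP) (hM : M.InputEnabled) (ν : ProbDist S) (a : Act) :
    ∃ ν', Lifted M ν a ν' := by
  classical
  set k : S → ProbDist S := fun s => Classical.choose (hM s a) with hk
  have hkt : ∀ s, M.trans s a (k s) := fun s => Classical.choose_spec (hM s a)
  refine ⟨⟨fun t => ∑ s, ν.f s * (k s).f t, ?_, ?_⟩, k, ?_, fun t => rfl⟩
  · intro t
    exact Finset.sum_nonneg fun s _ => mul_nonneg (ν.nonneg s) ((k s).nonneg t)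
  · rw [Finset.sum_comm]
    have : ∀ s : S, ∑ t, ν.f s * (k s).f t = ν.f s := by
      intro s; rw [← Finset.mul_sum, (k s).sum_one, mul_one]
    rw [Finset.sum_congr rfl fun s _ => this s, ν.sum_one]
  · intro s _
    refine ⟨1, fun _ => 1, fun _ => k s, fun _ => zero_le_one, by simp, fun _ => hkt s, ?_⟩
    intro t; simp

lemma bisimilar_one (M : PA S Act AP) (hM : M.InputEnabled) (γ : ℝ) (hγ0 : 0 < γ)
    (hγ1 : γ ≤ 1) (μ ν : ProbDist S) : ApproxBisimilar M γ 1 μ ν := by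
  refine ⟨fun ε _ _ => 1 ≤ ε, ⟨fun ε x y h => h, ?_⟩, le_refl 1⟩
  intro ε μ₀ ν₀ hε
  refine ⟨le_trans (dAP_le_one M μ₀ ν₀) hε, ?_⟩
  intro a μ' _
  obtain ⟨ν', hν'⟩ := lifted_exists M hM ν₀ a
  refine ⟨ν', hν', ?_⟩
  calc (1:ℝ) ≤ ε := hε
    _ ≤ ε / γ := by
        rw [le_div_iff₀ hγ0]
        nlinarith [le_trans zero_le_one hε]

lemma bisimilar_symm_s11 {M : PA S Act AP} {γ ε : ℝ} {μ ν : ProbDist S}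
    (h : ApproxBisimilar M γ ε μ ν) : ApproxBisimilar M γ ε ν μ := by
  obtain ⟨R, hR, hr⟩ := h
  exact ⟨R, hR, hR.1 ε hr⟩

lemma bisimilar_dAP {M : PA S Act AP} {γ ε : ℝ} {μ ν : ProbDist S}
    (h : ApproxBisimilar M γ ε μ ν) : dAP M.L μ ν ≤ ε := by
  obtain ⟨R, hR, hr⟩ := h
  exact (hR.2 ε μ ν hr).1

lemma bisimilar_step_s11 {M : PA S Act AP} {γ ε : ℝ} {μ ν : ProbDist S}
    (h : ApproxBisimilar M γ ε μ ν) {a : Act} {μ' : ProbDist S} (hl : Lifted M μ a μ') :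
    ∃ ν', Lifted M ν a ν' ∧ ApproxBisimilar M γ (ε / γ) μ' ν' := by
  obtain ⟨R, hR, hr⟩ := h
  obtain ⟨ν', hν', hr'⟩ := (hR.2 ε μ ν hr).2 a μ' hl
  exact ⟨ν', hν', R, hR, hr'⟩

lemma bisimilar_add {M : PA S Act AP} {γ ε₁ ε₂ : ℝ} {μ ν ω : ProbDist S}
    (h1 : ApproxBisimilar M γ ε₁ μ ν) (h2 : ApproxBisimilar M γ ε₂ ν ω) :
    ApproxBisimilar M γ (ε₁ + ε₂) μ ω := by
  refine ⟨fun ε x z => ∃ a b y, a + b = ε ∧ ApproxBisimilar M γ a x y ∧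
      ApproxBisimilar M γ b y z, ⟨?_, ?_⟩, ε₁, ε₂, ν, rfl, h1, h2⟩
  · rintro ε x z ⟨a, b, y, hab, hx, hz⟩
    exact ⟨b, a, y, by linarith, bisimilar_symm_s11 hz, bisimilar_symm_s11 hx⟩
  · rintro ε x z ⟨a, b, y, hab, hx, hz⟩
    constructor
    · calc dAP M.L x z ≤ dAP M.L x y + dAP M.L y z := dAP_triangle M x y z
        _ ≤ a + b := add_le_add (bisimilar_dAP hx) (bisimilar_dAP hz)
        _ = ε := hab
    · intro act x' hx'
      obtain ⟨y', hy', hxy⟩ := bisimilar_step_s11 hx hx'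
      obtain ⟨z', hz', hyz⟩ := bisimilar_step_s11 hz hy'
      exact ⟨z', hz', a / γ, b / γ, y', by rw [← hab, add_div], hxy, hyz⟩

end Aux

theorem stmt11 {S Act AP : Type} [Fintype S] [Fintype AP] [DecidableEq AP]
    (M : PA S Act AP) (hM : M.InputEnabled) (γ : ℝ) (hγ0 : 0 < γ) (hγ1 : γ ≤ 1) :
    (∀ μ : ProbDist S, Db M γ μ μ = 0) ∧
    (∀ μ ν : ProbDist S, Db M γ μ ν = Db M γ ν μ) ∧
    (∀ μ ν ω : ProbDist S, Db M γ μ ν + Db M γ ν ω ≥ Db M γ μ ω) :=  by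
  have hbdd : ∀ μ ν : ProbDist S,
      BddBelow {ε | 0 ≤ ε ∧ ApproxBisimilar M γ ε μ ν} :=
    fun μ ν => ⟨0, fun x hx => hx.1⟩
  have hne : ∀ μ ν : ProbDist S,
      ({ε | 0 ≤ ε ∧ ApproxBisimilar M γ ε μ ν}).Nonempty :=
    fun μ ν => ⟨1, zero_le_one, bisimilar_one M hM γ hγ0 hγ1 μ ν⟩
  refine ⟨?_, ?_, ?_⟩
  · intro μ
    apply le_antisymm
    · apply csInf_le (hbdd μ μ)
      refine ⟨le_refl 0, fun ε x y => x = y ∧ 0 ≤ ε, ⟨?_, ?_⟩, rfl, le_refl 0⟩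
      · rintro ε x y ⟨rfl, hε⟩
        exact ⟨rfl, hε⟩
      · rintro ε x y ⟨rfl, hε⟩
        refine ⟨by rw [dAP_self]; exact hε, ?_⟩
        intro a μ' hμ'
        exact ⟨μ', hμ', rfl, div_nonneg hε (le_of_lt hγ0)⟩
    · exact le_csInf (hne μ μ) fun ε hε => hε.1
  · intro μ ν
    unfold Db
    congr 1
    ext ε
    exact ⟨fun h => ⟨h.1, bisimilar_symm_s11 h.2⟩, fun h => ⟨h.1, bisimilar_symm_s11 h.2⟩⟩
  · intro μ ν ω
    have key : ∀ ε₁ ∈ {ε | 0 ≤ ε ∧ ApproxBisimilar M γ ε μ ν},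
        ∀ ε₂ ∈ {ε | 0 ≤ ε ∧ ApproxBisimilar M γ ε ν ω},
        Db M γ μ ω ≤ ε₁ + ε₂ := by
      intro ε₁ h₁ ε₂ h₂
      exact csInf_le (hbdd μ ω) ⟨add_nonneg h₁.1 h₂.1, bisimilar_add h₁.2 h₂.2⟩
    have step1 : ∀ ε₁ ∈ {ε | 0 ≤ ε ∧ ApproxBisimilar M γ ε μ ν},
        Db M γ μ ω - ε₁ ≤ Db M γ ν ω := by
      intro ε₁ h₁
      apply le_csInf (hne ν ω)
      intro ε₂ h₂
      linarith [key ε₁ h₁ ε₂ h₂]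
    have step2 : Db M γ μ ω - Db M γ ν ω ≤ Db M γ μ ν := by
      apply le_csInf (hne μ ν)
      intro ε₁ h₁
      linarith [step1 ε₁ h₁]
    linarith
end
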